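/- Let M be the closed hyperplane of JH_∞ spanned by the functions vanishing at the root. Then M* has the w*-strong diameter two property: every convex combination Σᵢ₌₁ⁿ λᵢ S(B_{M*}, xᵢ, ε) of w*-slices of the closed unit ball of M* has diameter 2. -/

import Mathlib

open Metric

/-- A segment in the tree `T` of finite sequences of naturals: a finite subset totally
ordered under the prefix (extension) order. -/
def SegL (S : Finset (List ℕ)) : Prop :=
  ∀ s ∈ S, ∀ t ∈ S, s <+: t ∨ t <+: s

/-- An `n–m` segment: a nonempty segment whose least element has level (length) `n` and
whose greatest element has level `m`. -/
def IsNMSeg (S : Finset (List ℕ)) (n m : ℕ) : Prop :=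
  SegL S ∧ (∀ t ∈ S, n ≤ t.length ∧ t.length ≤ m) ∧
    (∃ t ∈ S, t.length = n) ∧ (∃ t ∈ S, t.length = m)

/-- An admissible family of segments: pairwise disjoint `n–m` segments for a common pair
`n ≤ m`. -/
def AdmissibleL (F : Finset (Finset (List ℕ))) : Prop :=
  ∃ n m : ℕ, n ≤ m ∧ (∀ S ∈ F, IsNMSeg S n m) ∧
    ∀ S ∈ F, ∀ S' ∈ F, S ≠ S' → Disjoint S S'

/-- The `JH_∞` norm of a finitely supported function on `T`. -/
noncomputable def jhInfNorm (x : (List ℕ) →₀ ℝ) : ℝ :=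
  sSup {r : ℝ | ∃ F : Finset (Finset (List ℕ)), AdmissibleL F ∧
    r = ∑ S ∈ F, |∑ t ∈ S, x t|}

lemma jh_val_le (x : (List ℕ) →₀ ℝ) (F : Finset (Finset (List ℕ))) (hF : AdmissibleL F) :
    ∑ S ∈ F, |∑ t ∈ S, x t| ≤ ∑ t ∈ x.support, |x t| := by
  obtain ⟨n, m, hnm, hseg, hdisj⟩ := hF
  calc ∑ S ∈ F, |∑ t ∈ S, x t| ≤ ∑ S ∈ F, ∑ t ∈ S, |x t| := by
        apply Finset.sum_le_sum
        intro S _; exact Finset.abs_sum_le_sum_abs _ _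
    _ = ∑ t ∈ F.biUnion id, |x t| := by
        refine (Finset.sum_biUnion ?_).symm
        intro S hS S' hS' hne
        exact hdisj S hS S' hS' hne
    _ = ∑ t ∈ (F.biUnion id) ∩ x.support, |x t| := by
        apply (Finset.sum_subset (Finset.inter_subset_left) ?_).symm
        intro t ht hts
        have : x t = 0 := by
          by_contra h
          exact hts (Finset.mem_inter.mpr ⟨ht, Finsupp.mem_support_iff.mpr h⟩)
        simp [this]
    _ ≤ ∑ t ∈ x.support, |x t| := by
        apply Finset.sum_le_sum_of_subset_of_nonneg (Finset.inter_subset_right)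
        intro t _ _; exact abs_nonneg _

lemma jh_setne (x : (List ℕ) →₀ ℝ) :
    (0:ℝ) ∈ {r : ℝ | ∃ F : Finset (Finset (List ℕ)), AdmissibleL F ∧
      r = ∑ S ∈ F, |∑ t ∈ S, x t|} :=
  ⟨∅, ⟨1, 1, le_refl _, by simp, by simp⟩, by simp⟩

lemma jh_bdd (x : (List ℕ) →₀ ℝ) :
    BddAbove {r : ℝ | ∃ F : Finset (Finset (List ℕ)), AdmissibleL F ∧
      r = ∑ S ∈ F, |∑ t ∈ S, x t|} := by
  refine ⟨∑ t ∈ x.support, |x t|, ?_⟩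
  rintro r ⟨F, hF, rfl⟩
  exact jh_val_le x F hF

lemma jh_ge (x : (List ℕ) →₀ ℝ) (F : Finset (Finset (List ℕ))) (hF : AdmissibleL F) :
    ∑ S ∈ F, |∑ t ∈ S, x t| ≤ jhInfNorm x :=
  le_csSup (jh_bdd x) ⟨F, hF, rfl⟩

lemma jh_nonneg (x : (List ℕ) →₀ ℝ) : 0 ≤ jhInfNorm x :=
  le_csSup (jh_bdd x) (jh_setne x)

lemma jh_le (x : (List ℕ) →₀ ℝ) : jhInfNorm x ≤ ∑ t ∈ x.support, |x t| :=
  csSup_le ⟨0, jh_setne x⟩ (by rintro r ⟨F, hF, rfl⟩; exact jh_val_le x F hF)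

lemma jh_single (t₀ : List ℕ) (σ : ℝ) (hσ : |σ| = 1) :
    jhInfNorm (Finsupp.single t₀ σ) = 1 := by
  have hσ0 : σ ≠ 0 := by intro h; rw [h] at hσ; simp at hσ
  apply le_antisymm
  · calc jhInfNorm _ ≤ ∑ t ∈ (Finsupp.single t₀ σ).support, |(Finsupp.single t₀ σ) t| := jh_le _
      _ = 1 := by rw [Finsupp.support_single_ne_zero _ hσ0]; simp [hσ]
  · have := jh_ge (Finsupp.single t₀ σ) {{t₀}} ?_
    · simpa [hσ] using this
    · refine ⟨t₀.length, t₀.length, le_refl _, ?_, ?_⟩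
      · intro S hS
        simp only [Finset.mem_singleton] at hS
        subst hS
        exact ⟨by intro s hs t ht; simp_all, by simp, ⟨t₀, by simp⟩, ⟨t₀, by simp⟩⟩
      · intro S hS S' hS' hne; simp_all

lemma seg_min {S : Finset (List ℕ)} {n m : ℕ} (h : IsNMSeg S n m) :
    ∃ s ∈ S, s.length = n ∧ ∀ a ∈ S, s <+: a := by
  obtain ⟨hchain, hlen, ⟨s, hs, hsl⟩, _⟩ := h
  refine ⟨s, hs, hsl, fun a ha => ?_⟩
  rcases hchain s hs a ha with h | h
  · exact h
  · have : a.length ≤ s.length := h.length_le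
    have : n ≤ a.length := (hlen a ha).1
    have hae : a = s := h.eq_of_length (by omega)
    exact hae ▸ List.prefix_refl _
lemma seg_max {S : Finset (List ℕ)} {n m : ℕ} (h : IsNMSeg S n m) :
    ∃ u ∈ S, u.length = m ∧ ∀ a ∈ S, a <+: u := by
  obtain ⟨hchain, hlen, _, ⟨u, hu, hul⟩⟩ := h
  refine ⟨u, hu, hul, fun a ha => ?_⟩
  rcases hchain a ha u hu with h | h
  · exact h
  · have : u.length ≤ a.length := h.length_le
    have : a.length ≤ m := (hlen a ha).2
    have hae : u = a := h.eq_of_length (by omega)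
    exact hae ▸ List.prefix_refl _

lemma lemB (c : (List ℕ) →₀ ℝ) (hc : c [] = 0) (η : ℝ) (hη : 0 < η) :
    ∃ (F : Finset (Finset (List ℕ))) (n m : ℕ), 1 ≤ n ∧ n ≤ m ∧
      (∀ S ∈ F, IsNMSeg S n m) ∧ (∀ S ∈ F, ∀ S' ∈ F, S ≠ S' → Disjoint S S') ∧
      jhInfNorm c - η < ∑ S ∈ F, |∑ t ∈ S, c t| := by
  have h0 : ∀ r : ℝ, jhInfNorm c - η < r → r = 0 →
      ∃ (F : Finset (Finset (List ℕ))) (n m : ℕ), 1 ≤ n ∧ n ≤ m ∧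
      (∀ S ∈ F, IsNMSeg S n m) ∧ (∀ S ∈ F, ∀ S' ∈ F, S ≠ S' → Disjoint S S') ∧
      jhInfNorm c - η < ∑ S ∈ F, |∑ t ∈ S, c t| := by
    intro r hr hr0
    exact ⟨∅, 1, 1, le_refl _, le_refl _, by simp, by simp, by simpa [← hr0] using hr⟩
  have hlt : jhInfNorm c - η < jhInfNorm c := by linarith
  obtain ⟨r, ⟨F, ⟨nn, m, hnm, hseg, hdisj⟩, rfl⟩, hr⟩ :=
    exists_lt_of_lt_csSup ⟨0, jh_setne c⟩ hlt
  rcases Nat.eq_zero_or_pos nn with h0n | h0n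
  · subst h0n
    rcases Finset.eq_empty_or_nonempty F with rfl | ⟨S, hS⟩
    · exact h0 _ hr (by simp)
    · have hFS : F = {S} := by
        rw [Finset.eq_singleton_iff_unique_mem]
        refine ⟨hS, fun S' hS' => ?_⟩
        by_contra hne
        obtain ⟨t, ht, htl⟩ := (hseg S' hS').2.2.1
        obtain ⟨t', ht', htl'⟩ := (hseg S hS).2.2.1
        have : t = [] := List.length_eq_zero_iff.mp htl
        have : t' = [] := List.length_eq_zero_iff.mp htl'
        have := hdisj S' hS' S hS hne
        exact (Finset.disjoint_left.mp this ht) (by simp_all)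
      subst hFS
      have hsum : ∑ t ∈ S.erase [], c t = ∑ t ∈ S, c t := Finset.sum_erase _ hc
      rcases Finset.eq_empty_or_nonempty (S.erase []) with he | hne
      · refine h0 _ hr ?_
        simp only [Finset.sum_singleton]
        rw [← hsum, he]; simp
      · have hine : ((S.erase []).image List.length).Nonempty := hne.image _
        set n₁ := ((S.erase []).image List.length).min' hine with hn₁
        set m₁ := ((S.erase []).image List.length).max' hine with hm₁
        obtain ⟨t₁, ht₁, ht₁l⟩ := Finset.mem_image.mp (Finset.min'_mem _ hine)
        obtain ⟨t₂, ht₂, ht₂l⟩ := Finset.mem_image.mp (Finset.max'_mem _ hine)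
        refine ⟨{S.erase []}, n₁, m₁, ?_, ?_, ?_, by simp, ?_⟩
        · have : t₁ ≠ [] := (Finset.mem_erase.mp ht₁).1
          have : t₁.length ≠ 0 := fun h => this (List.length_eq_zero_iff.mp h)
          omega
        · exact by have h := Finset.min'_le ((S.erase []).image List.length) _ (Finset.mem_image_of_mem List.length ht₂); omega
        · intro S' hS'
          simp only [Finset.mem_singleton] at hS'
          subst hS'
          refine ⟨?_, ?_, ⟨t₁, ht₁, ht₁l⟩, ⟨t₂, ht₂, ht₂l⟩⟩
          · intro s hs t ht
            exact (hseg S (by simp)).1 s (Finset.mem_of_mem_erase hs) t (Finset.mem_of_mem_erase ht)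
          · intro t ht
            constructor
            · exact Finset.min'_le _ _ (Finset.mem_image_of_mem _ ht)
            · exact Finset.le_max' _ _ (Finset.mem_image_of_mem _ ht)
        · simpa [hsum] using hr
  · exact ⟨F, nn, m, h0n, hnm, hseg, hdisj, hr⟩

lemma prefix_of_prefix_same_length {a b x : List ℕ} (ha : a <+: x) (hb : b <+: x)
    (h : a.length = b.length) : a = b :=
  (List.prefix_of_prefix_length_le ha hb (le_of_eq h)).eq_of_length h

lemma append_prefix_append {l t t' : List ℕ} (h : t <+: t') : l ++ t <+: l ++ t' := by
  obtain ⟨w, rfl⟩ := h; exact ⟨w, by simp⟩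

lemma replicate_prefix {j L K : ℕ} (h : j ≤ L) : List.replicate j K <+: List.replicate L K :=
  ⟨List.replicate (L - j) K, by rw [← List.replicate_add]; congr 1; omega⟩

lemma lemA (c : (List ℕ) →₀ ℝ) (F : Finset (Finset (List ℕ))) (n m : ℕ)
    (hn : 1 ≤ n) (hnm : n ≤ m)
    (hseg : ∀ S ∈ F, IsNMSeg S n m)
    (hdisj : ∀ S ∈ F, ∀ S' ∈ F, S ≠ S' → Disjoint S S')
    (K₀ L : ℕ) (hL : m < L)
    (hfresh : ∀ S ∈ F, ∀ l ∈ S, ∀ a ∈ l, a < K₀)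
    (hfreshc : ∀ l ∈ c.support, ∀ a ∈ l, a < K₀)
    (σ : ℝ) (hσ : |σ| = 1) :
    ∃ F' : Finset (Finset (List ℕ)), AdmissibleL F' ∧
      ∑ S ∈ F', |∑ t ∈ S, (c + Finsupp.single (List.replicate L K₀) σ) t|
        = (∑ S ∈ F, |∑ t ∈ S, c t|) + 1 := by
  classical
  set t₀ : List ℕ := List.replicate L K₀ with ht₀
  set d : (List ℕ) →₀ ℝ := Finsupp.single t₀ σ with hd
  set A : Finset (List ℕ) := (Finset.Icc n L).image (fun j => List.replicate j K₀) with hA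
  set ext : Finset (List ℕ) → Finset (List ℕ) := fun S =>
    (S.filter (fun l => l.length = m)).biUnion
      (fun u => (Finset.range (L - m)).image (fun j => u ++ (K₀+1) :: List.replicate j 0))
    with hext
  set g : Finset (List ℕ) → Finset (List ℕ) := fun S => S ∪ ext S with hg
  have hnL : n ≤ L := le_of_lt (lt_of_le_of_lt hnm hL)
  -- c vanishes on lists containing a large entry
  have hcvan : ∀ x : List ℕ, (∃ a ∈ x, K₀ ≤ a) → c x = 0 := by
    intro x ⟨a, hax, ha⟩
    by_contra h
    exact absurd (hfreshc x (Finsupp.mem_support_iff.mpr h) a hax) (by omega)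
  -- members of ext S
  have hmemext : ∀ S, ∀ x ∈ ext S, ∃ u ∈ S, ∃ j < L - m,
      u.length = m ∧ x = u ++ (K₀+1) :: List.replicate j 0 := by
    intro S x hx
    simp only [hext, Finset.mem_biUnion, Finset.mem_filter, Finset.mem_image,
      Finset.mem_range] at hx
    obtain ⟨u, ⟨huS, hul⟩, j, hj, rfl⟩ := hx
    exact ⟨u, huS, j, hj, hul, rfl⟩
  have hextlen : ∀ S, ∀ x ∈ ext S, m < x.length ∧ x.length ≤ L := by
    intro S x hx
    obtain ⟨u, _, j, hj, hul, rfl⟩ := hmemext S x hx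
    simp [hul]; omega
  have hextbig : ∀ S, ∀ x ∈ ext S, (K₀+1) ∈ x := by
    intro S x hx
    obtain ⟨u, _, j, hj, hul, rfl⟩ := hmemext S x hx
    simp
  -- t₀ has all entries K₀
  have ht₀mem : ∀ a ∈ t₀, a = K₀ := fun a ha => List.eq_of_mem_replicate ha
  -- elements of S ∈ F have small entries, so are not t₀, not in A, not ext elements
  have hSsmall : ∀ S ∈ F, ∀ l ∈ S, ∀ a ∈ l, a < K₀ := hfresh
  -- min elements
  have hprefS : ∀ S ∈ F, ∃ s ∈ S, s.length = n ∧ ∀ x ∈ g S, s <+: x := by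
    intro S hS
    obtain ⟨s, hsS, hsl, hsp⟩ := seg_min (hseg S hS)
    obtain ⟨u, huS, hul, hup⟩ := seg_max (hseg S hS)
    refine ⟨s, hsS, hsl, fun x hx => ?_⟩
    rcases Finset.mem_union.mp hx with hx | hx
    · exact hsp x hx
    · obtain ⟨u', hu'S, j, hj, hu'l, rfl⟩ := hmemext S x hx
      exact (hsp u' hu'S).trans (List.prefix_append _ _)
  -- the sum over g S
  have hsumg : ∀ S ∈ F, ∑ t ∈ g S, (c + d) t = ∑ t ∈ S, c t := by
    intro S hS
    have hdisjSE : Disjoint S (ext S) := by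
      rw [Finset.disjoint_left]
      intro x hxS hxE
      have h1 := (hseg S hS).2.1 x hxS
      have h2 := hextlen S x hxE
      omega
    rw [hg]
    simp only []
    rw [Finset.sum_union hdisjSE]
    have h1 : ∑ t ∈ S, (c + d) t = ∑ t ∈ S, c t := by
      apply Finset.sum_congr rfl
      intro x hx
      have hxt₀ : x ≠ t₀ := by
        intro h
        have hK : K₀ ∈ x := by
          rw [h, ht₀]; exact List.mem_replicate.mpr ⟨by omega, rfl⟩
        exact absurd (hSsmall S hS x hx K₀ hK) (by omega)
      have hdx : d x = 0 := by rw [hd, Finsupp.single_apply, if_neg (fun h => hxt₀ h.symm)]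
      simp [hdx]
    have h2 : ∑ t ∈ ext S, (c + d) t = 0 := by
      apply Finset.sum_eq_zero
      intro x hx
      have hc0 : c x = 0 := hcvan x ⟨K₀+1, hextbig S x hx, by omega⟩
      have hxt₀ : x ≠ t₀ := by
        intro h
        have : (K₀+1) ∈ t₀ := h ▸ hextbig S x hx
        have := ht₀mem _ this
        omega
      have hdx : d x = 0 := by rw [hd, Finsupp.single_apply, if_neg (fun h => hxt₀ h.symm)]
      simp [hc0, hdx]
    rw [h1, h2, add_zero]
  -- the sum over A
  have hsumA : ∑ t ∈ A, (c + d) t = σ := by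
    rw [hA]
    rw [Finset.sum_image (by
      intro j hj j' hj' h
      have := congrArg List.length h
      simpa using this)]
    have : ∀ j ∈ Finset.Icc n L, (c + d) (List.replicate j K₀) = if j = L then σ else 0 := by
      intro j hj
      simp only [Finset.mem_Icc] at hj
      have hc0 : c (List.replicate j K₀) = 0 := by
        apply hcvan
        exact ⟨K₀, List.mem_replicate.mpr ⟨by omega, rfl⟩, le_refl _⟩
      have : d (List.replicate j K₀) = if j = L then σ else 0 := by
        rw [hd, Finsupp.single_apply]
        by_cases h : j = L
        · subst h; simp [ht₀]
        · have : t₀ ≠ List.replicate j K₀ := by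
            intro hh
            have := congrArg List.length hh
            simp [ht₀] at this
            omega
          simp [this, h]
      simp [hc0, this]
    rw [Finset.sum_congr rfl this]
    simp [Finset.sum_ite_eq', Finset.mem_Icc, hnL]
  -- g S is an n-L segment
  have hgseg : ∀ S ∈ F, IsNMSeg (g S) n L := by
    intro S hS
    obtain ⟨hchain, hlen, ⟨s, hsS, hsl⟩, _⟩ := hseg S hS
    obtain ⟨u, huS, hul, hup⟩ := seg_max (hseg S hS)
    refine ⟨?_, ?_, ⟨s, Finset.mem_union_left _ hsS, hsl⟩, ?_⟩
    · -- chain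
      intro a ha b hb
      rcases Finset.mem_union.mp ha with ha | ha <;> rcases Finset.mem_union.mp hb with hb | hb
      · exact hchain a ha b hb
      · obtain ⟨u', hu'S, j, hj, hu'l, rfl⟩ := hmemext S b hb
        have : u' = u := prefix_of_prefix_same_length (hup u' hu'S) (List.prefix_refl u) (by omega) |>.trans rfl
        subst this
        exact Or.inl ((hup a ha).trans (List.prefix_append _ _))
      · obtain ⟨u', hu'S, j, hj, hu'l, rfl⟩ := hmemext S a ha
        have : u' = u := prefix_of_prefix_same_length (hup u' hu'S) (List.prefix_refl u) (by omega)
        subst this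
        exact Or.inr ((hup b hb).trans (List.prefix_append _ _))
      · obtain ⟨u', hu'S, j, hj, hu'l, rfl⟩ := hmemext S a ha
        obtain ⟨u'', hu''S, j', hj', hu''l, rfl⟩ := hmemext S b hb
        have h1 : u' = u := prefix_of_prefix_same_length (hup u' hu'S) (List.prefix_refl u) (by omega)
        have h2 : u'' = u := prefix_of_prefix_same_length (hup u'' hu''S) (List.prefix_refl u) (by omega)
        subst h1; subst h2
        rcases le_total j j' with h | h
        · exact Or.inl (append_prefix_append (by
            exact List.cons_prefix_cons.mpr ⟨rfl, replicate_prefix h⟩))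
        · exact Or.inr (append_prefix_append (by
            exact List.cons_prefix_cons.mpr ⟨rfl, replicate_prefix h⟩))
    · -- lengths
      intro t ht
      rcases Finset.mem_union.mp ht with ht | ht
      · have := hlen t ht; omega
      · have := hextlen S t ht; omega
    · -- element of length L
      refine ⟨u ++ (K₀+1) :: List.replicate (L - m - 1) 0, ?_, ?_⟩
      · apply Finset.mem_union_right
        rw [hext]
        simp only [Finset.mem_biUnion, Finset.mem_filter, Finset.mem_image, Finset.mem_range]
        exact ⟨u, ⟨huS, hul⟩, L - m - 1, by omega, rfl⟩
      · simp [hul]; omega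
  -- A is an n-L segment
  have hAseg : IsNMSeg A n L := by
    refine ⟨?_, ?_, ?_, ?_⟩
    · intro a ha b hb
      rw [hA] at ha hb
      obtain ⟨j, hj, rfl⟩ := Finset.mem_image.mp ha
      obtain ⟨j', hj', rfl⟩ := Finset.mem_image.mp hb
      rcases le_total j j' with h | h
      · exact Or.inl (replicate_prefix h)
      · exact Or.inr (replicate_prefix h)
    · intro t ht
      obtain ⟨j, hj, rfl⟩ := Finset.mem_image.mp ht
      simp only [Finset.mem_Icc] at hj
      simp; omega
    · exact ⟨List.replicate n K₀, Finset.mem_image_of_mem _ (by simp [Finset.mem_Icc, hnL]), by simp⟩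
    · exact ⟨List.replicate L K₀, Finset.mem_image_of_mem _ (by simp [Finset.mem_Icc, hnL]), by simp⟩
  -- membership in g S implies small-entry or ext
  have hAdisjg : ∀ S ∈ F, Disjoint A (g S) := by
    intro S hS
    rw [Finset.disjoint_left]
    intro x hxA hxg
    obtain ⟨j, hj, rfl⟩ := Finset.mem_image.mp hxA
    simp only [Finset.mem_Icc] at hj
    have hK₀mem : K₀ ∈ List.replicate j K₀ := List.mem_replicate.mpr ⟨by omega, rfl⟩
    rcases Finset.mem_union.mp hxg with hx | hx
    · exact absurd (hSsmall S hS _ hx K₀ hK₀mem) (by omega)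
    · have := hextbig S _ hx
      have := List.eq_of_mem_replicate this
      omega
  -- disjointness of g S and g S'
  have hgdisj : ∀ S ∈ F, ∀ S' ∈ F, S ≠ S' → Disjoint (g S) (g S') := by
    intro S hS S' hS' hne
    rw [Finset.disjoint_left]
    intro x hx hx'
    obtain ⟨s, hsS, hsl, hsp⟩ := hprefS S hS
    obtain ⟨s', hs'S, hs'l, hs'p⟩ := hprefS S' hS'
    have : s = s' := prefix_of_prefix_same_length (hsp x hx) (hs'p x hx') (by omega)
    subst this
    exact (Finset.disjoint_left.mp (hdisj S hS S' hS' hne) hsS) hs'S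
  -- injectivity of g on F
  have hginj : ∀ S ∈ F, ∀ S' ∈ F, g S = g S' → S = S' := by
    intro S hS S' hS' h
    by_contra hne
    obtain ⟨s, hsS, hsl, hsp⟩ := hprefS S hS
    have : s ∈ g S := Finset.mem_union_left _ hsS
    rw [h] at this
    exact Finset.disjoint_left.mp (hgdisj S hS S' hS' hne) (Finset.mem_union_left _ hsS) this
  -- A not in the image
  have hAnotmem : A ∉ F.image g := by
    intro h
    obtain ⟨S, hS, hgS⟩ := Finset.mem_image.mp h
    obtain ⟨s, hsS, hsl, _⟩ := hprefS S hS
    have : s ∈ A := hgS ▸ Finset.mem_union_left _ hsS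
    obtain ⟨j, hj, hjs⟩ := Finset.mem_image.mp this
    simp only [Finset.mem_Icc] at hj
    have : K₀ ∈ s := hjs ▸ List.mem_replicate.mpr ⟨by omega, rfl⟩
    exact absurd (hSsmall S hS s hsS K₀ this) (by omega)
  refine ⟨insert A (F.image g), ⟨n, L, hnL, ?_, ?_⟩, ?_⟩
  · intro S hSF
    rcases Finset.mem_insert.mp hSF with rfl | hSF
    · exact hAseg
    · obtain ⟨S', hS', rfl⟩ := Finset.mem_image.mp hSF
      exact hgseg S' hS'
  · intro T hT T' hT' hne
    rcases Finset.mem_insert.mp hT with rfl | hT <;> rcases Finset.mem_insert.mp hT' with h' | hT'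
    · exact absurd h'.symm hne
    · obtain ⟨S', hS', rfl⟩ := Finset.mem_image.mp hT'
      exact hAdisjg S' hS'
    · subst h'
      obtain ⟨S, hS, rfl⟩ := Finset.mem_image.mp hT
      exact (hAdisjg S hS).symm
    · obtain ⟨S, hS, rfl⟩ := Finset.mem_image.mp hT
      obtain ⟨S', hS', rfl⟩ := Finset.mem_image.mp hT'
      exact hgdisj S hS S' hS' (fun h => hne (h ▸ rfl))
  · rw [Finset.sum_insert hAnotmem, hsumA, hσ]
    rw [Finset.sum_image (fun S hS S' hS' h => hginj S hS S' hS' h)]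
    rw [Finset.sum_congr rfl (fun S hS => by rw [hsumg S hS])]
    ring

lemma construct_y (X : Type*) [NormedAddCommGroup X] [NormedSpace ℝ X]
    (e : List ℕ → X)
    (hnorm : ∀ x : (List ℕ) →₀ ℝ, x [] = 0 → ‖∑ t ∈ x.support, x t • e t‖ = jhInfNorm x)
    (hdense : Dense (Submodule.span ℝ (e '' {t : List ℕ | t ≠ []}) : Set X))
    (n : ℕ) (xs : Fin n → X) (hxs : ∀ i, ‖xs i‖ = 1)
    (δ : ℝ) (hδ : 0 < δ) :
    ∃ y : X, ‖y‖ = 1 ∧ ∀ i, 2 - δ < ‖xs i + y‖ ∧ 2 - δ < ‖xs i - y‖ := by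
  classical
  set δ₀ := δ/4 with hδ₀
  have hδ₀pos : 0 < δ₀ := by positivity
  have happrox : ∀ i, ∃ c : (List ℕ) →₀ ℝ, c [] = 0 ∧
      ‖xs i - ∑ t ∈ c.support, c t • e t‖ < δ₀ := by
    intro i
    obtain ⟨v, hv, hvd⟩ := Metric.mem_closure_iff.mp (hdense (xs i)) δ₀ hδ₀pos
    obtain ⟨c, hcsupp, hcv⟩ := (Finsupp.mem_span_image_iff_linearCombination ℝ).mp hv
    refine ⟨c, ?_, ?_⟩
    · exact (Finsupp.mem_supported' ℝ c).mp hcsupp [] (by simp)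
    · have : v = ∑ t ∈ c.support, c t • e t := by
        rw [← hcv, Finsupp.linearCombination_apply]; rfl
      rw [← this, ← dist_eq_norm]; exact hvd
  choose c hc0 hcd using happrox
  set v : Fin n → X := fun i => ∑ t ∈ (c i).support, c i t • e t with hv
  have hjh : ∀ i, ‖v i‖ = jhInfNorm (c i) := fun i => hnorm (c i) (hc0 i)
  have hv1 : ∀ i, 1 - δ₀ < ‖v i‖ := by
    intro i
    have h1 := hcd i
    have h2 : ‖xs i‖ - ‖v i‖ ≤ ‖xs i - v i‖ := norm_sub_norm_le _ _
    rw [hxs i] at h2; linarith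
  choose F nn mm h1n hnmm hseg hdisj hgt using fun i => lemB (c i) (hc0 i) δ₀ hδ₀pos
  set B : Finset (List ℕ) :=
    (Finset.univ.biUnion fun i => (c i).support) ∪
      (Finset.univ.biUnion fun i => (F i).biUnion id) with hB
  set K₀ : ℕ := (B.sup fun l => l.sum) + 1 with hK₀
  set L : ℕ := (Finset.univ.sup mm) + 1 with hLdef
  have hLm : ∀ i, mm i < L := by
    intro i
    have : mm i ≤ Finset.univ.sup mm := Finset.le_sup (Finset.mem_univ i)
    omega
  have hBsmall : ∀ l ∈ B, ∀ a ∈ l, a < K₀ := by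
    intro l hl a ha
    have h1 : a ≤ l.sum := List.le_sum_of_mem ha
    have h2 : l.sum ≤ B.sup fun l => l.sum := Finset.le_sup hl
    omega
  have hfresh : ∀ i, ∀ S ∈ F i, ∀ l ∈ S, ∀ a ∈ l, a < K₀ := by
    intro i S hS l hl a ha
    refine hBsmall l ?_ a ha
    rw [hB]
    apply Finset.mem_union_right
    exact Finset.mem_biUnion.mpr ⟨i, Finset.mem_univ i,
      Finset.mem_biUnion.mpr ⟨S, hS, hl⟩⟩
  have hfreshc : ∀ i, ∀ l ∈ (c i).support, ∀ a ∈ l, a < K₀ := by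
    intro i l hl a ha
    refine hBsmall l ?_ a ha
    rw [hB]
    exact Finset.mem_union_left _ (Finset.mem_biUnion.mpr ⟨i, Finset.mem_univ i, hl⟩)
  set t₀ : List ℕ := List.replicate L K₀ with ht₀
  have ht₀ne : t₀ ≠ [] := by
    rw [ht₀]
    simp [List.replicate_eq_nil_iff]
  set y : X := e t₀ with hy
  have hynorm : ‖y‖ = 1 := by
    have h0 : (Finsupp.single t₀ (1:ℝ)) [] = 0 :=
      Finsupp.single_eq_of_ne' (fun h => ht₀ne h)
    have := hnorm (Finsupp.single t₀ (1:ℝ)) h0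
    rw [jh_single t₀ 1 (abs_one)] at this
    rw [← this]
    congr 1
    rw [Finsupp.support_single_ne_zero _ one_ne_zero]
    simp [hy]
  -- key norm estimate
  have hkey : ∀ i, ∀ σ : ℝ, |σ| = 1 → 2 - δ < ‖xs i + σ • y‖ := by
    intro i σ hσ
    obtain ⟨F', hF'adm, hF'sum⟩ := lemA (c i) (F i) (nn i) (mm i) (h1n i) (hnmm i)
      (hseg i) (hdisj i) K₀ L (hLm i) (hfresh i) (hfreshc i) σ hσ
    have hge : (∑ S ∈ F i, |∑ t ∈ S, c i t|) + 1 ≤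
        jhInfNorm (c i + Finsupp.single t₀ σ) := by
      rw [← hF'sum]
      exact jh_ge _ F' hF'adm
    have hσ0 : σ ≠ 0 := by intro h; rw [h] at hσ; simp at hσ
    have h00 : (c i + Finsupp.single t₀ σ) [] = 0 := by
      rw [Finsupp.add_apply, hc0 i, Finsupp.single_eq_of_ne' (fun h => ht₀ne h)]
      simp
    have hnormeq : ‖v i + σ • y‖ = jhInfNorm (c i + Finsupp.single t₀ σ) := by
      rw [← hnorm _ h00]
      congr 1
      have hs : ∀ x : (List ℕ) →₀ ℝ, ∑ t ∈ x.support, x t • e t = x.sum fun t a => a • e t :=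
        fun x => rfl
      rw [hs]
      rw [Finsupp.sum_add_index' (fun t => zero_smul ℝ (e t)) (fun t a b => add_smul a b (e t))]
      rw [Finsupp.sum_single_index (zero_smul ℝ (e t₀))]
      rw [hv, hy]
      rfl
    have hbig : 2 - 3*δ₀ < ‖v i + σ • y‖ := by
      rw [hnormeq]
      have h1 := hgt i
      have h2 := hv1 i
      rw [hjh i] at *
      linarith
    have htri : ‖v i + σ • y‖ ≤ ‖xs i + σ • y‖ + ‖xs i - v i‖ := by
      have : v i + σ • y = (xs i + σ • y) - (xs i - v i) := by abel
      rw [this]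
      exact norm_sub_le _ _
    have h3 := hcd i
    have h4 : ‖xs i - v i‖ < δ₀ := h3
    have : 2 - 4*δ₀ < ‖xs i + σ • y‖ := by linarith
    rw [hδ₀] at this
    linarith
  refine ⟨y, hynorm, fun i => ⟨?_, ?_⟩⟩
  · have := hkey i 1 (abs_one)
    rwa [one_smul] at this
  · have := hkey i (-1) (by simp)
    rwa [neg_one_smul, ← sub_eq_add_neg] at this

set_option maxHeartbeats 1000000 in
/-- The dual of the hyperplane `M` of `JH_∞` (completion of the finitely
supported functions vanishing at the root) has the w*-strong diameter two property: every
convex combination of w*-slices of `B_{M*}` has diameter `2`. -/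
theorem stmt14 (X : Type*) [NormedAddCommGroup X] [NormedSpace ℝ X] [CompleteSpace X]
    (e : List ℕ → X)
    (hnorm : ∀ x : (List ℕ) →₀ ℝ, x [] = 0 → ‖∑ t ∈ x.support, x t • e t‖ = jhInfNorm x)
    (hdense : Dense (Submodule.span ℝ (e '' {t : List ℕ | t ≠ []}) : Set X))
    (n : ℕ) (hn : 0 < n)
    (lam : Fin n → ℝ) (hlam : ∀ i, 0 ≤ lam i) (hsum : ∑ i, lam i = 1)
    (xs : Fin n → X) (hxs : ∀ i, ‖xs i‖ = 1) (ε : ℝ) (hε : 0 < ε) :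
    Metric.diam {g : X →L[ℝ] ℝ | ∃ z : Fin n → (X →L[ℝ] ℝ),
      (∀ i, ‖z i‖ ≤ 1 ∧ z i (xs i) > 1 - ε) ∧ g = ∑ i, lam i • z i} = 2 := by
  classical
  set SS : Set (X →L[ℝ] ℝ) := {g : X →L[ℝ] ℝ | ∃ z : Fin n → (X →L[ℝ] ℝ),
      (∀ i, ‖z i‖ ≤ 1 ∧ z i (xs i) > 1 - ε) ∧ g = ∑ i, lam i • z i} with hSS
  have hball : ∀ g ∈ SS, ‖g‖ ≤ 1 := by
    rintro g ⟨z, hz, rfl⟩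
    calc ‖∑ i, lam i • z i‖ ≤ ∑ i, ‖lam i • z i‖ := norm_sum_le _ _
      _ ≤ ∑ i, lam i := by
          apply Finset.sum_le_sum
          intro i _
          calc ‖lam i • z i‖ = ‖lam i‖ * ‖z i‖ := norm_smul (α := ℝ) (β := X →L[ℝ] ℝ) _ _
            _ = lam i * ‖z i‖ := by rw [Real.norm_eq_abs, abs_of_nonneg (hlam i)]
            _ ≤ lam i * 1 := mul_le_mul_of_nonneg_left (hz i).1 (hlam i)
            _ = lam i := mul_one _
      _ = 1 := hsum
  apply le_antisymm
  · apply Metric.diam_le_of_forall_dist_le (by norm_num)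
    intro g hg g' hg'
    rw [dist_eq_norm]
    have h1 := hball g hg
    have h2 := hball g' hg'
    have := norm_sub_le g g'
    linarith
  · apply le_of_forall_pos_le_add
    intro η hη
    set δ : ℝ := min (η/2) (min ε 1) with hδdef
    have hδpos : 0 < δ := by
      apply lt_min (by linarith) (lt_min hε (by norm_num))
    have hδε : δ ≤ ε := le_trans (min_le_right _ _) (min_le_left _ _)
    have hδ1 : δ ≤ 1 := le_trans (min_le_right _ _) (min_le_right _ _)
    have hδη : 2*δ ≤ η := by
      have : δ ≤ η/2 := min_le_left _ _
      linarith
    obtain ⟨y, hy1, hy2⟩ := construct_y X e hnorm hdense n xs hxs δ hδpos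
    have hne1 : ∀ i, xs i + y ≠ 0 := by
      intro i h
      have := (hy2 i).1
      rw [h] at this
      simp at this
      linarith
    have hne2 : ∀ i, xs i - y ≠ 0 := by
      intro i h
      have := (hy2 i).2
      rw [h] at this
      simp at this
      linarith
    choose f hf1 hf2 using fun i => exists_dual_vector ℝ (xs i + y) (norm_ne_zero_iff.mpr (hne1 i))
    choose g hg1 hg2 using fun i => exists_dual_vector ℝ (xs i - y) (norm_ne_zero_iff.mpr (hne2 i))
    have hfy : ∀ i, f i y ≤ 1 := by
      intro i
      have := (f i).le_opNorm y
      rw [hf1 i, hy1] at this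
      have h2 : f i y ≤ ‖f i y‖ := le_abs_self _
      simpa using le_trans h2 (by simpa using this)
    have hfxs : ∀ i, f i (xs i) ≤ 1 := by
      intro i
      have := (f i).le_opNorm (xs i)
      rw [hf1 i, hxs i] at this
      have h2 : f i (xs i) ≤ ‖f i (xs i)‖ := le_abs_self _
      simpa using le_trans h2 (by simpa using this)
    have hgxs : ∀ i, g i (xs i) ≤ 1 := by
      intro i
      have := (g i).le_opNorm (xs i)
      rw [hg1 i, hxs i] at this
      have h2 : g i (xs i) ≤ ‖g i (xs i)‖ := le_abs_self _
      simpa using le_trans h2 (by simpa using this)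
    -- slice membership values
    have hfadd : ∀ i, f i (xs i) + f i y = ‖xs i + y‖ := by
      intro i
      rw [← map_add]
      exact hf2 i
    have hgsub : ∀ i, g i (xs i) - g i y = ‖xs i - y‖ := by
      intro i
      rw [← map_sub]
      exact hg2 i
    have hfxs_gt : ∀ i, f i (xs i) > 1 - ε := by
      intro i
      have h1 := (hy2 i).1
      have h2 := hfadd i
      have h3 := hfy i
      have : f i (xs i) > 1 - δ := by linarith
      linarith
    have hfy_gt : ∀ i, f i y > 1 - δ := by
      intro i
      have h1 := (hy2 i).1
      have h2 := hfadd i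
      have h3 := hfxs i
      linarith
    have hgxs_gt : ∀ i, g i (xs i) > 1 - ε := by
      intro i
      have h1 := (hy2 i).2
      have h2 := hgsub i
      have h4 : |(g i) y| ≤ 1 := by
        have := (g i).le_opNorm y
        rw [hg1 i, hy1] at this
        simpa using this
      have h5 := neg_abs_le ((g i) y)
      have : g i (xs i) > 1 - δ := by linarith
      linarith
    have hgy_lt : ∀ i, g i y < δ - 1 := by
      intro i
      have h1 := (hy2 i).2
      have h2 := hgsub i
      have h3 := hgxs i
      linarith
    set fS : X →L[ℝ] ℝ := ∑ i, lam i • f i with hfS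
    set gS : X →L[ℝ] ℝ := ∑ i, lam i • g i with hgS
    have hfmem : fS ∈ SS := ⟨f, fun i => ⟨le_of_eq (hf1 i), hfxs_gt i⟩, rfl⟩
    have hgmem : gS ∈ SS := ⟨g, fun i => ⟨le_of_eq (hg1 i), hgxs_gt i⟩, rfl⟩
    have happly : (fS - gS) y = ∑ i, lam i * (f i y - g i y) := by
      rw [ContinuousLinearMap.sub_apply, hfS, hgS]
      rw [ContinuousLinearMap.sum_apply, ContinuousLinearMap.sum_apply]
      rw [← Finset.sum_sub_distrib]
      apply Finset.sum_congr rfl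
      intro i _
      rw [ContinuousLinearMap.smul_apply, ContinuousLinearMap.smul_apply]
      rw [smul_eq_mul, smul_eq_mul]
      ring
    have hlow : 2 - 2*δ ≤ (fS - gS) y := by
      rw [happly]
      calc (2 - 2*δ : ℝ) = ∑ i, lam i * (2 - 2*δ) := by
            rw [← Finset.sum_mul, hsum, one_mul]
        _ ≤ ∑ i, lam i * (f i y - g i y) := by
            apply Finset.sum_le_sum
            intro i _
            apply mul_le_mul_of_nonneg_left _ (hlam i)
            have := hfy_gt i
            have := hgy_lt i
            linarith
    have hdist : 2 - 2*δ ≤ dist fS gS := by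
      have h1 : (fS - gS) y ≤ ‖fS - gS‖ := by
        have := (fS - gS).le_opNorm y
        rw [hy1, mul_one] at this
        exact le_trans (le_abs_self _) (by simpa using this)
      rw [dist_eq_norm]
      linarith
    have hbounded : Bornology.IsBounded SS := by
      apply (Metric.isBounded_closedBall (x := (0 : X →L[ℝ] ℝ)) (r := 1)).subset
      intro g hg
      rw [Metric.mem_closedBall, dist_zero_right]
      exact hball g hg
    have := Metric.dist_le_diam_of_mem hbounded hfmem hgmem
    linarith
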